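/- (Aczél–Dhombres, Theorem 11.17) Let E be a real inner product space of dimension at least 2. A continuous function f : E → ℝ is orthogonally additive (i.e. f(x + y) = f(x) + f(y) whenever ⟨x, y⟩ = 0) if and only if there exist a real constant a and a continuous linear functional h : E → ℝ such that f(x) = a·‖x‖² + h(x) for all x ∈ E. -/
import Mathlib


open scoped RealInnerProductSpace

section AczelDhombresAux

variable {E : Type*} [NormedAddCommGroup E] [InnerProductSpace ℝ E]

/-- In an inner product space of rank at least 2, every vector has a unit vector
orthogonal to it. -/
lemma ad_exists_unit_orth (hdim : 2 ≤ Module.rank ℝ E) (x : E) :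
    ∃ e : E, ⟪x, e⟫ = 0 ∧ ‖e‖ = 1 := by
  have hK : (ℝ ∙ x)ᗮ ≠ ⊥ := by
    intro h
    have htop : (ℝ ∙ x) = ⊤ := (Submodule.orthogonal_eq_bot_iff).1 h
    have h1 : Module.rank ℝ (ℝ ∙ x : Submodule ℝ E) ≤ 1 := by
      simpa using rank_span_le (R := ℝ) ({x} : Set E)
    have h2 : Module.rank ℝ E ≤ 1 := by
      rw [← rank_top ℝ E, ← htop]; exact h1
    have := hdim.trans h2
    norm_num at this
  obtain ⟨z, hzK, hz0⟩ := Submodule.ne_bot_iff _ |>.1 hK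
  have hxz : ⟪x, z⟫ = 0 := by
    have := hzK x (Submodule.mem_span_singleton_self x)
    simpa [real_inner_comm] using this
  refine ⟨‖z‖⁻¹ • z, ?_, ?_⟩
  · rw [real_inner_smul_right, hxz, mul_zero]
  · rw [norm_smul, norm_inv, norm_norm, inv_mul_cancel₀ (norm_ne_zero_iff.2 hz0)]

/-- Existence of an orthogonal vector of the same norm. -/
lemma ad_exists_same_norm_orth (hdim : 2 ≤ Module.rank ℝ E) (x : E) :
    ∃ y : E, ⟪x, y⟫ = 0 ∧ ‖y‖ = ‖x‖ := by
  obtain ⟨e, he, hen⟩ := ad_exists_unit_orth hdim x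
  refine ⟨‖x‖ • e, ?_, ?_⟩
  · rw [real_inner_smul_right, he, mul_zero]
  · rw [norm_smul, Real.norm_eq_abs, abs_norm, hen, mul_one]

/-- An odd orthogonally additive function on an inner product space of rank at
least 2 is additive. -/
lemma ad_odd_additive (hdim : 2 ≤ Module.rank ℝ E) (k : E → ℝ)
    (hk : ∀ x y : E, ⟪x, y⟫ = 0 → k (x + y) = k x + k y)
    (hodd : ∀ x : E, k (-x) = - k x) :
    ∀ x y : E, k (x + y) = k x + k y := by
  have k0 : k 0 = 0 := by
    have := hk 0 0 (by simp)
    simpa using this.symm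
  -- doubling
  have kdouble : ∀ v : E, k (v + v) = 2 * k v := by
    intro v
    obtain ⟨y, hvy, hny⟩ := ad_exists_same_norm_orth hdim v
    have horth : ⟪v + y, v - y⟫ = 0 := by
      have hvv : ⟪v, v⟫ = ‖v‖ ^ 2 := real_inner_self_eq_norm_sq v
      have hyy : ⟪y, y⟫ = ‖y‖ ^ 2 := real_inner_self_eq_norm_sq y
      have hyv : ⟪y, v⟫ = 0 := by rw [real_inner_comm]; exact hvy
      rw [inner_add_left, inner_sub_right, inner_sub_right]
      rw [hvv, hyy, hvy, hyv, hny]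
      ring
    have h1 : v + v = (v + y) + (v - y) := by abel
    have h2 : k ((v + y) + (v - y)) = k (v + y) + k (v - y) := hk _ _ horth
    have h3 : k (v + y) = k v + k y := hk _ _ hvy
    have h4 : k (v - y) = k v + k (-y) := by
      have : ⟪v, -y⟫ = 0 := by rw [inner_neg_right, hvy, neg_zero]
      have := hk v (-y) this
      simpa [sub_eq_add_neg] using this
    rw [h1, h2, h3, h4, hodd]
    ring
  -- line lemma
  have line : ∀ e1 e2 : E, ⟪e1, e2⟫ = 0 → ‖e1‖ = 1 → ‖e2‖ = 1 →
      ∀ s t : ℝ, k ((s + t) • e1) = k (s • e1) + k (t • e1) := by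
    intro e1 e2 hee he1 he2
    have he11 : ⟪e1, e1⟫ = (1 : ℝ) := by
      rw [real_inner_self_eq_norm_sq, he1]; norm_num
    have he21 : ⟪e2, e1⟫ = 0 := by rw [real_inner_comm]; exact hee
    have hsplit : ∀ a b : ℝ, ⟪a • e1, b • e2⟫ = 0 := by
      intro a b
      rw [real_inner_smul_left, real_inner_smul_right, hee]
      ring
    have key : ∀ s t : ℝ, s * t ≤ 0 → k ((s + t) • e1) = k (s • e1) + k (t • e1) := by
      intro s t hst
      set u := Real.sqrt (-(s * t)) with hu
      have hu2 : u * u = -(s * t) := Real.mul_self_sqrt (by linarith)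
      have horth : ⟪s • e1 + u • e2, t • e1 + u • e2⟫ = 0 := by
        rw [inner_add_left, inner_add_right, inner_add_right,
          real_inner_smul_left, real_inner_smul_left, real_inner_smul_left,
          real_inner_smul_left, real_inner_smul_right, real_inner_smul_right,
          real_inner_smul_right, real_inner_smul_right, he11, hee, he21,
          real_inner_self_eq_norm_sq, he2]
        ring_nf
        nlinarith [hu2]
      have hsum : (s • e1 + u • e2) + (t • e1 + u • e2)
          = (s + t) • e1 + (u + u) • e2 := by
        rw [add_smul, add_smul]; abel
      have h2 : k ((s + t) • e1 + (u + u) • e2)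
          = k ((s + t) • e1) + k ((u + u) • e2) := hk _ _ (hsplit _ _)
      have h3 : k ((u + u) • e2) = 2 * k (u • e2) := by
        rw [add_smul]; exact kdouble _
      have h4 : k (s • e1 + u • e2) = k (s • e1) + k (u • e2) := hk _ _ (hsplit _ _)
      have h5 : k (t • e1 + u • e2) = k (t • e1) + k (u • e2) := hk _ _ (hsplit _ _)
      have h6 := hk _ _ horth
      rw [hsum] at h6
      rw [h2, h3, h4, h5] at h6
      linarith
    intro s t
    rcases le_or_gt (s * t) 0 with h | h
    · exact key s t h
    · have h' : (s + t) * (-t) ≤ 0 := by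
        have heq : (s + t) * (-t) = -(s * t) - t ^ 2 := by ring
        have ht2 := sq_nonneg t
        rw [heq]
        linarith
      have := key (s + t) (-t) h'
      have hneg : k ((-t) • e1) = - k (t • e1) := by
        rw [neg_smul]; exact hodd _
      rw [hneg] at this
      have hst : s + t + -t = s := by ring
      rw [hst] at this
      linarith
  -- full additivity
  intro x y
  by_cases hx : x = 0
  · simp [hx, k0]
  · set e1 : E := ‖x‖⁻¹ • x with he1def
    have he1 : ‖e1‖ = 1 := norm_smul_inv_norm hx
    obtain ⟨e2, hee, he2⟩ := ad_exists_unit_orth hdim e1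
    have he11 : ⟪e1, e1⟫ = (1 : ℝ) := by
      rw [real_inner_self_eq_norm_sq, he1]; norm_num
    have hxe : x = ‖x‖ • e1 := by
      rw [he1def, smul_smul, mul_inv_cancel₀ (norm_ne_zero_iff.2 hx), one_smul]
    set t : ℝ := ⟪e1, y⟫ with htdef
    set w : E := y - t • e1 with hwdef
    have hw : ∀ a : ℝ, ⟪a • e1, w⟫ = 0 := by
      intro a
      rw [real_inner_smul_left, hwdef, inner_sub_right, real_inner_smul_right,
        he11]
      ring
    have hy : y = t • e1 + w := by rw [hwdef]; abel
    have hsum : x + y = (‖x‖ + t) • e1 + w := by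
      conv_lhs => rw [hxe, hy]
      rw [add_smul]; abel
    calc k (x + y) = k ((‖x‖ + t) • e1 + w) := by rw [hsum]
      _ = k ((‖x‖ + t) • e1) + k w := hk _ _ (hw _)
      _ = k (‖x‖ • e1) + k (t • e1) + k w := by
          rw [line e1 e2 hee he1 he2]
      _ = k x + (k (t • e1) + k w) := by rw [← hxe]; ring
      _ = k x + k (t • e1 + w) := by rw [hk _ _ (hw t)]
      _ = k x + k y := by rw [← hy]

/-- An even continuous orthogonally additive function is `a * ‖x‖ ^ 2`. -/
lemma ad_even_part (hdim : 2 ≤ Module.rank ℝ E) (g : E → ℝ)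
    (hg : ∀ x y : E, ⟪x, y⟫ = 0 → g (x + y) = g x + g y)
    (heven : ∀ x : E, g (-x) = g x) (hcont : Continuous g) :
    ∃ a : ℝ, ∀ x : E, g x = a * ‖x‖ ^ 2 := by
  have g0 : g 0 = 0 := by
    have := hg 0 0 (by simp)
    simpa using this.symm
  -- g depends only on the norm
  have hnormdep : ∀ x y : E, ‖x‖ = ‖y‖ → g x = g y := by
    intro x y hn
    set u : E := (2 : ℝ)⁻¹ • (x + y) with hu
    set v : E := (2 : ℝ)⁻¹ • (x - y) with hv
    have huv : ⟪u, v⟫ = 0 := by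
      rw [hu, hv, real_inner_smul_left, real_inner_smul_right, inner_add_left,
        inner_sub_right, inner_sub_right, real_inner_self_eq_norm_sq,
        real_inner_self_eq_norm_sq, real_inner_comm y x, hn]
      ring
    have hx : x = u + v := by rw [hu, hv]; module
    have hy : y = u + (-v) := by rw [hu, hv]; module
    have huv' : ⟪u, -v⟫ = 0 := by rw [inner_neg_right, huv, neg_zero]
    rw [hx, hy, hg _ _ huv, hg _ _ huv', heven]
  obtain ⟨e1, _, he1⟩ := ad_exists_unit_orth hdim (0 : E)
  obtain ⟨e2, hee, he2⟩ := ad_exists_unit_orth hdim e1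
  have hnorm_smul : ∀ (c : ℝ) (e : E), ‖e‖ = 1 → 0 ≤ c → ‖c • e‖ = c := by
    intro c e he hc
    rw [norm_smul, Real.norm_eq_abs, he, mul_one, abs_of_nonneg hc]
  set H : ℝ → ℝ := fun s => g (Real.sqrt s • e1) with hHdef
  have Hcont : Continuous H := hcont.comp (Real.continuous_sqrt.smul continuous_const)
  have H0 : H 0 = 0 := by simp [hHdef, g0]
  have Hnn : ∀ s t : ℝ, 0 ≤ s → 0 ≤ t → H (s + t) = H s + H t := by
    intro s t hs ht
    set a : E := Real.sqrt s • e1 with ha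
    set b : E := Real.sqrt t • e2 with hb
    have hab : ⟪a, b⟫ = 0 := by
      rw [ha, hb, real_inner_smul_left, real_inner_smul_right, hee]; ring
    have hna : ‖a‖ = Real.sqrt s := hnorm_smul _ _ he1 (Real.sqrt_nonneg s)
    have hnb : ‖b‖ = Real.sqrt t := hnorm_smul _ _ he2 (Real.sqrt_nonneg t)
    have hnab : ‖a + b‖ = Real.sqrt (s + t) := by
      have hsq : ‖a + b‖ ^ 2 = s + t := by
        rw [norm_add_sq_real, hab, hna, hnb, Real.sq_sqrt hs, Real.sq_sqrt ht]
        ring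
      rw [← Real.sqrt_sq (norm_nonneg (a + b)), hsq]
    have h1 : g (a + b) = g a + g b := hg _ _ hab
    have h2 : g (a + b) = H (s + t) := by
      apply hnormdep
      rw [hnab, hnorm_smul _ _ he1 (Real.sqrt_nonneg _)]
    have h3 : g b = H t := by
      apply hnormdep
      rw [hnb, hnorm_smul _ _ he1 (Real.sqrt_nonneg _)]
    rw [← h2, h1, h3]
  -- two-sided extension
  set Ht : ℝ → ℝ := fun s => H (max s 0) - H (max (-s) 0) with hHtdef
  have Htadd : ∀ s t : ℝ, Ht (s + t) = Ht s + Ht t := by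
    intro s t
    have hmax : ∀ a : ℝ, max a 0 = (a + |a|) / 2 := by
      intro a
      rcases le_total 0 a with h | h
      · rw [max_eq_left h, abs_of_nonneg h]; ring
      · rw [max_eq_right h, abs_of_nonpos h]; ring
    have key : H (max s 0 + max t 0 + max (-(s + t)) 0)
        = H (max (s + t) 0 + (max (-s) 0 + max (-t) 0)) := by
      congr 1
      rw [hmax, hmax, hmax, hmax, hmax, hmax, abs_neg, abs_neg, abs_neg]
      ring
    have e1' : H (max s 0 + max t 0 + max (-(s + t)) 0)
        = H (max s 0) + H (max t 0) + H (max (-(s + t)) 0) := by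
      rw [Hnn _ _ (by positivity) (le_max_right _ _),
        Hnn _ _ (le_max_right _ _) (le_max_right _ _)]
    have e2' : H (max (s + t) 0 + (max (-s) 0 + max (-t) 0))
        = H (max (s + t) 0) + (H (max (-s) 0) + H (max (-t) 0)) := by
      rw [Hnn _ _ (le_max_right _ _) (by positivity),
        Hnn _ _ (le_max_right _ _) (le_max_right _ _)]
    rw [e1', e2'] at key
    simp only [hHtdef]
    linarith
  have Htcont : Continuous Ht := by
    apply Continuous.sub
    · exact Hcont.comp (continuous_id.max continuous_const)
    · exact Hcont.comp ((continuous_neg).max continuous_const)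
  set φ : ℝ →+ ℝ := AddMonoidHom.mk' Ht Htadd with hφ
  have hlin : ∀ s : ℝ, Ht s = s * Ht 1 := by
    intro s
    have := map_real_smul φ Htcont s 1
    simpa [hφ, smul_eq_mul] using this
  refine ⟨Ht 1, fun x => ?_⟩
  have h1 : g x = H (‖x‖ ^ 2) := by
    apply hnormdep
    rw [hnorm_smul _ _ he1 (Real.sqrt_nonneg _), Real.sqrt_sq (norm_nonneg x)]
  have h2 : Ht (‖x‖ ^ 2) = H (‖x‖ ^ 2) := by
    simp only [hHtdef]
    rw [max_eq_left (by positivity), max_eq_right (neg_nonpos.2 (by positivity)), H0]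
    ring
  rw [h1, ← h2, hlin]
  ring

end AczelDhombresAux

/-- Aczél–Dhombres, Theorem 11.17: on a real inner product space of dimension at
least 2, a continuous function is orthogonally additive iff it is of the form
`a * ‖x‖ ^ 2 + h x` for a constant `a` and a continuous linear functional `h`. -/
theorem aczel_dhombres_orthogonally_additive (E : Type*) [NormedAddCommGroup E]
    [InnerProductSpace ℝ E] (hdim : 2 ≤ Module.rank ℝ E) (f : E → ℝ)
    (hf : Continuous f) :
    (∀ x y : E, ⟪x, y⟫ = 0 → f (x + y) = f x + f y) ↔
      ∃ (a : ℝ) (h : E →L[ℝ] ℝ), ∀ x : E, f x = a * ‖x‖ ^ 2 + h x := by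
  constructor
  · intro hadd
    set g : E → ℝ := fun x => (f x + f (-x)) / 2 with hgdef
    set k : E → ℝ := fun x => (f x - f (-x)) / 2 with hkdef
    have hneg : ∀ x y : E, ⟪x, y⟫ = 0 → f (-(x + y)) = f (-x) + f (-y) := by
      intro x y hxy
      have h := hadd (-x) (-y) (by rw [inner_neg_neg]; exact hxy)
      rw [neg_add]
      exact h
    have hgadd : ∀ x y : E, ⟪x, y⟫ = 0 → g (x + y) = g x + g y := by
      intro x y hxy
      simp only [hgdef]
      rw [hadd _ _ hxy, hneg _ _ hxy]
      ring
    have hkadd : ∀ x y : E, ⟪x, y⟫ = 0 → k (x + y) = k x + k y := by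
      intro x y hxy
      simp only [hkdef]
      rw [hadd _ _ hxy, hneg _ _ hxy]
      ring
    have hgeven : ∀ x : E, g (-x) = g x := by intro x; simp [hgdef]; ring
    have hkodd : ∀ x : E, k (-x) = - k x := by intro x; simp [hkdef]; ring
    have hgcont : Continuous g :=
      ((hf.add (hf.comp continuous_neg)).div_const 2)
    have hkcont : Continuous k :=
      ((hf.sub (hf.comp continuous_neg)).div_const 2)
    obtain ⟨a, ha⟩ := ad_even_part hdim g hgadd hgeven hgcont
    have hkfull := ad_odd_additive hdim k hkadd hkodd
    set ψ : E →+ ℝ := AddMonoidHom.mk' k hkfull with hψ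
    refine ⟨a, ψ.toRealLinearMap hkcont, fun x => ?_⟩
    have hx : f x = g x + k x := by simp [hgdef, hkdef]; ring
    rw [hx, ha]
    simp [hψ]
  · rintro ⟨a, h, hfx⟩ x y hxy
    have hn : ‖x + y‖ ^ 2 = ‖x‖ ^ 2 + ‖y‖ ^ 2 := by
      rw [norm_add_sq_real, hxy]; ring
    rw [hfx, hfx, hfx, hn, map_add]
    ring
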